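/- Let y : E → [0,1] be edge values on a graph G such that y_e = 1 for every edge e of a matching M, y_e = 0 for edges adjacent to M, and y_e ≤ ε² for all edges not in or adjacent to M. Then for every vertex set S with |S| = 2k+1 ≤ 1/ε, the blossom inequality holds: Σ_{(u,v)∈E, u,v∈S} y_{(u,v)} ≤ k. -/

import Mathlib

open Finset
open scoped Classical

private lemma sym2_mk_out {V : Type*} (e : Sym2 V) : Sym2.mk e.out.1 e.out.2 = e := by
  exact e.out_eq

/-- Let `y : E → [0,1]` with `y_e = 1` on the edges of a matching
`M`, `y_e = 0` on edges adjacent to `M`, and `y_e ≤ ε²` on all other edges.  Then for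
every vertex set `S` with `|S| = 2k+1 ≤ 1/ε`, the blossom inequality
`Σ_{e ⊆ S} y_e ≤ k` holds. -/
theorem stmt_18 {V : Type*} [Fintype V]
    (E M : Finset (Sym2 V)) (y : Sym2 V → ℝ) (ε : ℝ)
    (hε0 : 0 < ε) (hε1 : ε ≤ 1)
    (hsimple : ∀ e ∈ E, ¬ e.IsDiag)
    (hME : M ⊆ E)
    (hmatch : ∀ v : V, (M.filter (fun e => v ∈ e)).card ≤ 1)
    (hy0 : ∀ e, 0 ≤ y e) (hy1 : ∀ e, y e ≤ 1)
    (hyM : ∀ e ∈ M, y e = 1)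
    (hyadj : ∀ e ∈ E, e ∉ M → (∃ m ∈ M, ∃ v : V, v ∈ e ∧ v ∈ m) → y e = 0)
    (hysmall : ∀ e ∈ E, e ∉ M → ¬ (∃ m ∈ M, ∃ v : V, v ∈ e ∧ v ∈ m) → y e ≤ ε ^ 2) :
    ∀ (S : Finset V) (k : ℕ), S.card = 2 * k + 1 → (S.card : ℝ) ≤ 1 / ε →
      ∑ e ∈ E.filter (fun e => ∀ v ∈ e, v ∈ S), y e ≤ (k : ℝ) := by
  intro S k hcard hεS
  classical
  set F := E.filter (fun e => ∀ v ∈ e, v ∈ S) with hF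
  set A := F.filter (fun e => e ∈ M) with hA
  set B := F.filter (fun e => ¬ e ∈ M) with hB
  set C := B.filter (fun e => ¬ ∃ m ∈ M, ∃ v : V, v ∈ e ∧ v ∈ m) with hC
  have hAE : ∀ e ∈ A, e ∈ E ∧ (∀ v ∈ e, v ∈ S) ∧ e ∈ M := by
    intro e he
    have h1 := Finset.mem_filter.mp he
    have h2 := Finset.mem_filter.mp h1.1
    exact ⟨h2.1, h2.2, h1.2⟩
  -- two distinct matching edges are disjoint
  have hdisj : ∀ e ∈ M, ∀ f ∈ M, e ≠ f → ∀ v : V, v ∈ e → v ∈ f → False := by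
    intro e he f hf hef v hve hvf
    have hsub : ({e, f} : Finset (Sym2 V)) ⊆ M.filter (fun x => v ∈ x) := by
      intro x hx
      rcases Finset.mem_insert.mp hx with rfl | hx
      · exact Finset.mem_filter.mpr ⟨he, hve⟩
      · rcases Finset.mem_singleton.mp hx with rfl
        exact Finset.mem_filter.mpr ⟨hf, hvf⟩
    have h2 := (Finset.card_le_card hsub).trans (hmatch v)
    rw [Finset.card_pair hef] at h2
    omega
  -- vertices covered by edges of A
  set T := A.biUnion (fun e => Finset.univ.filter (fun v => v ∈ e)) with hT
  have hTcard : T.card = 2 * A.card := by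
    rw [hT, Finset.card_biUnion]
    · have hcard2 : ∀ e ∈ A, (Finset.univ.filter (fun v => v ∈ e)).card = 2 := by
        intro e he
        have hout := sym2_mk_out e
        rcases he2 : e.out with ⟨a, b⟩
        rw [he2] at hout
        have hab : a ≠ b := by
          intro h
          exact hsimple _ (hAE _ he).1 (by rw [← hout]; exact Sym2.mk_isDiag_iff.mpr h)
        have hset : Finset.univ.filter (fun v => v ∈ e) = {a, b} := by
          ext v
          simp only [Finset.mem_filter, Finset.mem_univ, true_and, Finset.mem_insert,
            Finset.mem_singleton, ← hout, Sym2.mem_iff]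
        rw [hset, Finset.card_pair hab]
      rw [Finset.sum_congr rfl hcard2, Finset.sum_const, smul_eq_mul, mul_comm]
    · intro e he f hf hef
      rw [Function.onFun, Finset.disjoint_left]
      intro v hv hv'
      exact hdisj e (hAE _ he).2.2 f (hAE _ hf).2.2 hef v
        (Finset.mem_filter.mp hv).2 (Finset.mem_filter.mp hv').2
  have hTS : T ⊆ S := by
    intro v hv
    obtain ⟨e, he, hv⟩ := Finset.mem_biUnion.mp hv
    exact (hAE _ he).2.1 v (Finset.mem_filter.mp hv).2
  have hAk : A.card ≤ k := by
    have := Finset.card_le_card hTS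
    omega
  set t := k - A.card with ht
  have htk : A.card + t = k := by omega
  -- uncovered vertices of S
  set S' := S.filter (fun v => ¬ ∃ m ∈ M, v ∈ m) with hS'
  have hS'card : S'.card ≤ 2 * t + 1 := by
    have hsub : S' ⊆ S \ T := by
      intro v hv
      have h1 := Finset.mem_filter.mp hv
      refine Finset.mem_sdiff.mpr ⟨h1.1, fun hvT => ?_⟩
      obtain ⟨e, he, hve⟩ := Finset.mem_biUnion.mp hvT
      exact h1.2 ⟨e, (hAE _ he).2.2, (Finset.mem_filter.mp hve).2⟩
    have h2 := Finset.card_le_card hsub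
    rw [Finset.card_sdiff_of_subset hTS] at h2
    omega
  -- C injects into S'.offDiag
  have hCoff : C.card ≤ S'.offDiag.card := by
    apply Finset.card_le_card_of_injOn (fun e => e.out)
    · intro e he
      have h1 := Finset.mem_filter.mp he
      have h2 := Finset.mem_filter.mp h1.1
      have h3 := Finset.mem_filter.mp h2.1
      have heE : e ∈ E := h3.1
      have heS : ∀ v ∈ e, v ∈ S := h3.2
      have hnadj : ¬ ∃ m ∈ M, ∃ v : V, v ∈ e ∧ v ∈ m := h1.2
      have hmem : ∀ v ∈ e, v ∈ S' := by
        intro v hv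
        refine Finset.mem_filter.mpr ⟨heS v hv, fun ⟨m, hm, hvm⟩ => hnadj ⟨m, hm, v, hv, hvm⟩⟩
      refine Finset.mem_offDiag.mpr ⟨hmem _ e.out_fst_mem, hmem _ e.out_snd_mem, ?_⟩
      intro hdiag
      exact hsimple e heE (by
        rw [← sym2_mk_out e]
        exact Sym2.mk_isDiag_iff.mpr hdiag)
    · intro e _ f _ h
      rw [← sym2_mk_out e, ← sym2_mk_out f]
      exact congrArg (fun p => Sym2.mk p.1 p.2) h
  have hCbound : (C.card : ℝ) ≤ (2 * t + 1) * (2 * t) := by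
    have h1 : (C.card : ℝ) ≤ (S'.card : ℝ) * (S'.card : ℝ) - (S'.card : ℝ) := by
      have := hCoff
      rw [Finset.offDiag_card] at this
      have h2 : (C.card : ℝ) ≤ ((S'.card * S'.card - S'.card : ℕ) : ℝ) := by
        exact_mod_cast this
      have hle : S'.card ≤ S'.card * S'.card := by nlinarith [Nat.zero_le S'.card]
      rwa [Nat.cast_sub hle, Nat.cast_mul] at h2
    have hn : (S'.card : ℝ) ≤ 2 * t + 1 := by exact_mod_cast hS'card
    nlinarith [Nat.cast_nonneg (α := ℝ) S'.card]
  -- split the sum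
  have hsplit : ∑ e ∈ F, y e = ∑ e ∈ A, y e + ∑ e ∈ B, y e :=
    (Finset.sum_filter_add_sum_filter_not F _ y).symm
  have hAsum : ∑ e ∈ A, y e = (A.card : ℝ) := by
    rw [Finset.sum_congr rfl (fun e he => hyM e (hAE _ he).2.2), Finset.sum_const,
      nsmul_eq_mul, mul_one]
  have hBsum : ∑ e ∈ B, y e ≤ ε ^ 2 * C.card := by
    have hsplit2 : ∑ e ∈ B, y e
        = ∑ e ∈ B.filter (fun e => ∃ m ∈ M, ∃ v : V, v ∈ e ∧ v ∈ m), y e + ∑ e ∈ C, y e :=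
      (Finset.sum_filter_add_sum_filter_not B _ y).symm
    have hz : ∑ e ∈ B.filter (fun e => ∃ m ∈ M, ∃ v : V, v ∈ e ∧ v ∈ m), y e = 0 := by
      apply Finset.sum_eq_zero
      intro e he
      have h1 := Finset.mem_filter.mp he
      have h2 := Finset.mem_filter.mp h1.1
      have h3 := Finset.mem_filter.mp h2.1
      exact hyadj e h3.1 h2.2 h1.2
    have hc : ∑ e ∈ C, y e ≤ ε ^ 2 * C.card := by
      rw [mul_comm]
      calc ∑ e ∈ C, y e ≤ ∑ _e ∈ C, ε ^ 2 := by
            apply Finset.sum_le_sum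
            intro e he
            have h1 := Finset.mem_filter.mp he
            have h2 := Finset.mem_filter.mp h1.1
            have h3 := Finset.mem_filter.mp h2.1
            exact hysmall e h3.1 h2.2 h1.2
        _ = (C.card : ℝ) * ε ^ 2 := by rw [Finset.sum_const, nsmul_eq_mul]
    linarith
  -- final arithmetic
  have hεk : ε * (2 * k + 1) ≤ 1 := by
    rw [hcard] at hεS
    push_cast at hεS
    rw [le_div_iff₀ hε0] at hεS
    linarith
  have hεt : ε * (2 * t + 1) ≤ 1 := by
    have : (t : ℝ) ≤ (k : ℝ) := by exact_mod_cast Nat.sub_le k A.card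
    nlinarith
  have hsmall : ε ^ 2 * C.card ≤ (t : ℝ) := by
    rcases Nat.eq_zero_or_pos t with h0 | hpos
    · have : (C.card : ℝ) ≤ 0 := by rw [h0] at hCbound; push_cast at hCbound; linarith
      have hc0 : (0:ℝ) ≤ C.card := Nat.cast_nonneg _
      rw [h0]
      push_cast
      nlinarith
    · have ht1 : (1 : ℝ) ≤ (t : ℝ) := by exact_mod_cast hpos
      have hc0 : (0:ℝ) ≤ C.card := Nat.cast_nonneg _
      nlinarith [sq_nonneg (ε * (2 * t + 1)), mul_le_mul_of_nonneg_left hCbound (sq_nonneg ε),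
        mul_le_mul hεt hεt (by positivity) (by norm_num)]
  have hAk' : (A.card : ℝ) + (t : ℝ) = (k : ℝ) := by exact_mod_cast htk
  calc ∑ e ∈ F, y e = ∑ e ∈ A, y e + ∑ e ∈ B, y e := hsplit
    _ ≤ (A.card : ℝ) + ε ^ 2 * C.card := by rw [hAsum]; linarith
    _ ≤ (A.card : ℝ) + (t : ℝ) := by linarith
    _ = (k : ℝ) := hAk'
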